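/- arXiv:1906.11112 — 2 statements merged into one kernel-verified Lean document; each statement's English description precedes it below -/
import Mathlib

section
/- Let I₀ ⊆ ℝ be a bounded interval and K an infinite set of intervals contained in I₀ with inf_{I∈K} μ(I) > 0. Then there exists an infinite subset L ⊆ K and an interval J with μ(J) > 0 such that J ⊆ I for all I ∈ L. -/
open MeasureTheory Pointwise
noncomputable section

/-- Fourier transform of a real-valued function on ℝⁿ (real part; for even
real functions the Fourier transform is real, so this is lossless). -/
def FT {n : ℕ} (f : EuclideanSpace ℝ (Fin n) → ℝ) (ξ : EuclideanSpace ℝ (Fin n)) : ℝ :=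
  (VectorFourier.fourierIntegral Real.fourierChar volume (innerₗ (EuclideanSpace ℝ (Fin n)))
    (fun x => (f x : ℂ)) ξ).re

/-- Membership in the Cohn-Elkies class 𝓕ₙ. -/
def CEAdmissible (n : ℕ) (f : EuclideanSpace ℝ (Fin n) → ℝ) : Prop :=
  (∀ x, f (-x) = f x) ∧ Integrable f ∧ Integrable (FT f) ∧
    f 0 = FT f 0 ∧ 0 < f 0 ∧ (∀ ξ, 0 ≤ FT f ξ) ∧
    ∃ r > 0, ∀ x : EuclideanSpace ℝ (Fin n), r ≤ ‖x‖ → f x ≤ 0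

/-- r(f): the last sign change radius. -/
def rad {n : ℕ} (f : EuclideanSpace ℝ (Fin n) → ℝ) : ℝ :=
  sInf {r : ℝ | ∀ x : EuclideanSpace ℝ (Fin n), r ≤ ‖x‖ → f x ≤ 0}

/-- R(n): the optimal value of the Cohn-Elkies linear program. -/
def Rn (n : ℕ) : ℝ := sInf (rad '' {f : EuclideanSpace ℝ (Fin n) → ℝ | CEAdmissible n f})

def IsRadial {n : ℕ} (f : EuclideanSpace ℝ (Fin n) → ℝ) : Prop :=
  ∀ x y : EuclideanSpace ℝ (Fin n), ‖x‖ = ‖y‖ → f x = f y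

/-- A radial Cohn-Elkies (optimal) function. -/
def IsCohnElkies (n : ℕ) (f : EuclideanSpace ℝ (Fin n) → ℝ) : Prop :=
  CEAdmissible n f ∧ IsRadial f ∧ rad f = Rn n

/-- h = 𝟙_S ⋆ 𝟙_{-S}. -/
def hconv {n : ℕ} (S : Set (EuclideanSpace ℝ (Fin n))) (x : EuclideanSpace ℝ (Fin n)) : ℝ :=
  ∫ t, S.indicator (fun _ => (1:ℝ)) t * (-S).indicator (fun _ => (1:ℝ)) (x - t)

theorem stmt13 (a b : ℝ) (K : Set (ℝ × ℝ))
    (hK : K.Infinite)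
    (hsub : ∀ p ∈ K, Set.Icc p.1 p.2 ⊆ Set.Icc a b)
    (hlen : ∃ c > (0:ℝ), ∀ p ∈ K, c ≤ p.2 - p.1) :
    ∃ L ⊆ K, L.Infinite ∧ ∃ u v : ℝ, u < v ∧ ∀ p ∈ L, Set.Icc u v ⊆ Set.Icc p.1 p.2 := by
  obtain ⟨c, hc, hcK⟩ := hlen
  have hp1 : ∀ p ∈ K, a ≤ p.1 ∧ p.1 ≤ b := by
    intro p hp
    exact hsub p hp ⟨le_refl _, by linarith [hcK p hp]⟩
  haveI : Infinite K := hK.to_subtype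
  set m : ℕ := ⌊(b - a) / (c / 4)⌋₊ with hm
  have hgm : ∀ p ∈ K, ⌊(p.1 - a) / (c / 4)⌋₊ ≤ m := by
    intro p hp
    exact Nat.floor_le_floor (div_le_div_of_nonneg_right
      (by linarith [(hp1 p hp).1, (hp1 p hp).2]) (by positivity))
  let g : K → Fin (m + 1) := fun p =>
    ⟨⌊(p.1.1 - a) / (c / 4)⌋₊, Nat.lt_succ_of_le (hgm p.1 p.2)⟩
  obtain ⟨k, hk⟩ := Finite.exists_infinite_fiber g
  refine ⟨Subtype.val '' (g ⁻¹' {k}), by rintro x ⟨⟨y, hy⟩, -, rfl⟩; exact hy,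
    (Set.infinite_coe_iff.mp hk).image Subtype.val_injective.injOn,
    a + (k + 1) * (c / 4), a + (k + 1) * (c / 4) + c / 2, by linarith, ?_⟩
  rintro p ⟨⟨q, hq⟩, hgq, rfl⟩
  have h1 := (hp1 q hq).1
  have hcq := hcK q hq
  have hkeq : (k : ℕ) = ⌊(q.1 - a) / (c / 4)⌋₊ := by
    have := congrArg Fin.val (Set.mem_singleton_iff.mp hgq)
    exact this.symm
  have hc4 : (0:ℝ) < c / 4 := by positivity
  have hnonneg : 0 ≤ (q.1 - a) / (c / 4) := div_nonneg (by linarith) hc4.le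
  have hfl : ((k : ℕ) : ℝ) ≤ (q.1 - a) / (c / 4) := by
    rw [hkeq]; exact Nat.floor_le hnonneg
  have hfu : (q.1 - a) / (c / 4) < (k : ℕ) + 1 := by
    rw [hkeq]; exact Nat.lt_floor_add_one _
  rw [div_lt_iff₀ hc4] at hfu
  rw [le_div_iff₀ hc4] at hfl
  apply Set.Icc_subset_Icc <;> simp only <;> nlinarith
end
end

section
/- Let A ⊆ ℝ and C, c > 0 be such that every closed interval J of length C satisfies: J ∩ A contains a closed interval of length c. Let T ⊆ ℝ be unbounded above and I an interval with μ(I) = C. Then there exists an interval I' ⊆ I with μ(I') > 0 and an unbounded subset T' ⊆ T such that T' − I' ⊆ A. -/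
open MeasureTheory Pointwise
noncomputable section

theorem stmt14 (A : Set ℝ) (C c : ℝ) (hC : 0 < C) (hc : 0 < c)
    (hA : ∀ x : ℝ, ∃ u : ℝ, Set.Icc u (u + c) ⊆ Set.Icc x (x + C) ∩ A)
    (T : Set ℝ) (hT : ∀ M : ℝ, ∃ t ∈ T, M < t)
    (a : ℝ) :
    ∃ u v : ℝ, u < v ∧ Set.Icc u v ⊆ Set.Icc a (a + C) ∧
      ∃ T' ⊆ T, (∀ M : ℝ, ∃ t ∈ T', M < t) ∧

        ∀ t ∈ T', ∀ x ∈ Set.Icc u v, t - x ∈ A := by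
  choose g hg using hA
  have hgmem : ∀ x : ℝ, x ≤ g x ∧ g x + c ≤ x + C ∧ Set.Icc (g x) (g x + c) ⊆ A := by
    intro x
    have h1 := hg x
    have hmem1 : g x ∈ Set.Icc x (x + C) ∩ A := h1 ⟨le_refl _, by linarith⟩
    have hmem2 : g x + c ∈ Set.Icc x (x + C) ∩ A := h1 ⟨by linarith, le_refl _⟩
    exact ⟨hmem1.1.1, hmem2.1.2, fun y hy => (h1 hy).2⟩
  have hcC : c ≤ C := by
    obtain ⟨h1, h2, _⟩ := hgmem 0; linarith
  set e : ℝ := c / 2 with he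
  have he0 : 0 < e := by positivity
  set p : ℝ → ℝ := fun t => t - g (t - (a + C)) - c with hp
  have hpmem : ∀ t : ℝ, a ≤ p t ∧ p t ≤ a + C - c := by
    intro t
    obtain ⟨h1, h2, _⟩ := hgmem (t - (a + C))
    constructor <;> simp only [hp] <;> linarith
  set key : ℝ → ℕ := fun t => ⌊(p t - a) / e⌋₊ with hkey
  set K : ℕ := ⌊(C - c) / e⌋₊ with hK
  have hkeyle : ∀ t, key t ≤ K := by
    intro t
    have := (hpmem t).2
    exact Nat.floor_le_floor ((div_le_div_iff_of_pos_right he0).mpr (by linarith))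
  have hmain : ∃ k ≤ K, ∀ M : ℝ, ∃ t ∈ T, M < t ∧ key t = k := by
    by_contra h
    push_neg at h
    have h' : ∀ k : ℕ, ∃ M : ℝ, ∀ t ∈ T, M < t → (key t ≠ k ∨ K < k) := by
      intro k
      by_cases hk : k ≤ K
      · obtain ⟨M, hM⟩ := h k hk
        exact ⟨M, fun t ht hMt => Or.inl (fun hkk => absurd hkk (by
          have := hM t ht
          tauto))⟩
      · exact ⟨0, fun t ht _ => Or.inr (lt_of_not_ge hk)⟩
    choose M hM using h'
    obtain ⟨t, htT, htM⟩ := hT ((Finset.range (K+1)).sup' (by simp) M)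
    have hle : M (key t) ≤ (Finset.range (K+1)).sup' (by simp) M :=
      Finset.le_sup' M (by simp [Nat.lt_succ_iff, hkeyle t])
    rcases hM (key t) t htT (lt_of_le_of_lt hle htM) with h1 | h1
    · exact h1 rfl
    · exact absurd (hkeyle t) (not_le.mpr h1)
  obtain ⟨k, hkK, hkT⟩ := hmain
  have hkC : (k : ℝ) * e ≤ C - c := by
    have h1 : (k : ℝ) ≤ (K : ℝ) := by exact_mod_cast hkK
    have h2 : (K : ℝ) ≤ (C - c) / e := Nat.floor_le (div_nonneg (by linarith) he0.le)
    calc (k : ℝ) * e ≤ ((C - c) / e) * e :=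
          mul_le_mul_of_nonneg_right (le_trans h1 h2) he0.le
      _ = C - c := by field_simp
  refine ⟨a + (k + 1) * e, a + k * e + c, by nlinarith, ?_, {t | t ∈ T ∧ key t = k}, ?_, ?_, ?_⟩
  · intro x hx
    have h1 : (0:ℝ) ≤ (k:ℝ) := Nat.cast_nonneg k
    constructor
    · have := hx.1; nlinarith
    · have := hx.2; linarith
  · exact fun t ht => ht.1
  · intro M
    obtain ⟨t, htT, htM, htk⟩ := hkT M
    exact ⟨t, ⟨htT, htk⟩, htM⟩
  · rintro t ⟨htT, htk⟩ x hx
    have hnn : 0 ≤ (p t - a) / e := by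
      have := (hpmem t).1
      exact div_nonneg (by linarith) he0.le
    have hfl : (k : ℝ) ≤ (p t - a) / e := by
      rw [← htk]
      exact Nat.floor_le hnn
    have hfl2 : (p t - a) / e < (k : ℝ) + 1 := by
      rw [← htk]
      push_cast
      exact Nat.lt_floor_add_one _
    have h1 : (k : ℝ) * e ≤ p t - a := by
      have := mul_le_mul_of_nonneg_right hfl (le_of_lt he0)
      rwa [div_mul_cancel₀] at this
      exact ne_of_gt he0
    have h2 : p t - a < ((k : ℝ) + 1) * e := by
      have := mul_lt_mul_of_pos_right hfl2 he0
      rwa [div_mul_cancel₀] at this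
      exact ne_of_gt he0
    obtain ⟨_, _, hsub⟩ := hgmem (t - (a + C))
    apply hsub
    have hpx : p t = t - g (t - (a + C)) - c := rfl
    constructor
    · have := hx.2; simp only [hpx] at h1 ⊢; linarith
    · have := hx.1; simp only [hpx] at h2 ⊢; linarith
end
end
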